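/- The reduced string vertices satisfy the following symmetries: (1) 𝓕^{g,b}_{⋯|v₁⋯v_i|w₁⋯w_j|⋯} = (−1)^{(Σ_{k=1}^{i}|v_k|)(Σ_{k=1}^{j}|w_k|)} 𝓕^{g,b}_{⋯|w₁⋯w_j|v₁⋯v_i|⋯} (adjacent blocks may be exchanged at the cost of the Koszul sign), and (2) 𝓕^{g,b}_{⋯|v₁v₂⋯v_{i−1}v_i|⋯} = (−1)^{|v_i|(Σ_{k=1}^{i−1}|v_k|)} 𝓕^{g,b}_{⋯|v_i v₁ v₂⋯v_{i−1}|⋯} (each block may be cyclically rotated at the cost of the Koszul sign). -/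

import Mathlib

open Finset

noncomputable section

namespace Paper

variable (k : Type) [Field k]

/-- `msign m = (−1)^m`. -/
def msign (m : ℤ) : k := if Odd m then -1 else 1

/-- The Koszul sign of the action of a permutation `τ` on a tensor product of
homogeneous factors of degrees `d i`. -/
def koszulSign {n : ℕ} (d : Fin n → ℤ) (τ : Equiv.Perm (Fin n)) : k :=
  ∏ i : Fin n, ∏ j : Fin n,
    if i < j ∧ τ j < τ i ∧ Odd (d i) ∧ Odd (d j) then (-1 : k) else (1 : k)

variable (ι : Type) [Fintype ι] [DecidableEq ι] (deg : ι → ℤ)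

/-- The `n`-th tensor power of the graded vector space with basis `ι`, in coordinates. -/
abbrev TPow (n : ℕ) : Type := (Fin n → ι) →₀ k

/-- The Koszul-signed action of `τ ∈ Σ_n` on `A^{⊗n}`. -/
def permAct {n : ℕ} (τ : Equiv.Perm (Fin n)) : TPow k ι n →ₗ[k] TPow k ι n :=
  Finsupp.lift (TPow k ι n) k (Fin n → ι)
    (fun I => koszulSign k (fun p => deg (I p)) τ • Finsupp.single (I ∘ τ.symm) (1 : k))

/-- A (potential) basis element of `QO([n],G)`: a genus together with a multiset
of cycles in `[n] = Fin n`. -/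
abbrev QOEl (n : ℕ) : Type := ℕ × Multiset (Cycle (Fin n))

/-- The relabeling action of `σ ∈ Σ_n` on basis elements. -/
def qoAct {n : ℕ} (σ : Equiv.Perm (Fin n)) (x : QOEl n) : QOEl n :=
  (x.1, x.2.map (Cycle.map σ))

/-- Consecutive blocks of given lengths starting at a given offset. -/
def blocksAux : ℕ → List ℕ → List (List ℕ)
  | _, [] => []
  | s, (m :: rest) => ((List.range m).map (s + ·)) :: blocksAux (s + m) rest

/-- The canonical representative `\overline{(b_k)}^g` of the `Σ_n`-orbit of basis
elements of `QO([n],2g+b−1)` with b-sequence `(b_k)`: the cycles are listed with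
nondecreasing lengths, every nonempty cycle is a cyclic interval of consecutive
integers, and all elements of an earlier cycle are smaller than those of a later
one. -/
def canonEl (n : ℕ) (hn : 0 < n) (bk : ℕ → ℕ) (g : ℕ) : QOEl n :=
  (g, ((blocksAux 0 ((List.range (n + 1)).flatMap (fun m => List.replicate (bk m) m))).map
    (fun L => ((L.map (fun x => (⟨x % n, Nat.mod_lt _ hn⟩ : Fin n)) : List (Fin n)) :
      Cycle (Fin n))) : List (Cycle (Fin n))))

/-- The b-sequence associated to an ordered partition `(l₁,…,l_b̄)` together with
`b₀` empty parts: `b_k` is the number of parts equal to `k` for `k ≥ 1`, and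
`b_0 := b₀`. -/
def bseqOf {bbar : ℕ} (l : Fin bbar → ℕ) (b₀ : ℕ) : ℕ → ℕ :=
  fun m => if m = 0 then b₀ else (Finset.univ.filter (fun i => l i = m)).card

/-- `σ ∈ Σ_n` is the block permutation `β_{(l₁,…,l_b̄)}` : it moves the `t`-th
consecutive block of `[n]` (of length `l t`, starting at `Σ_{t'<t} l t'`),
order-preservingly, to the position occupied by the `β(t)`-th block of the
reordered partition. -/
def IsBlockPerm (n : ℕ) {bbar : ℕ} (l : Fin bbar → ℕ) (β : Equiv.Perm (Fin bbar))
    (σ : Equiv.Perm (Fin n)) : Prop :=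
  ∀ (t : Fin bbar) (j : ℕ), j < l t →
    ∀ h1 : (∑ t' : Fin bbar, if t' < t then l t' else 0) + j < n,
      ((σ ⟨(∑ t' : Fin bbar, if t' < t then l t' else 0) + j, h1⟩ : Fin n) : ℕ) =
        (∑ t' : Fin bbar, if β t' < β t then l t' else 0) + j

/-- `β` sorts the partition `(l₁,…,l_b̄)` : `l_{β⁻¹(1)} ≤ ⋯ ≤ l_{β⁻¹(b̄)}`. -/
def SortsBlocks {bbar : ℕ} (l : Fin bbar → ℕ) (β : Equiv.Perm (Fin bbar)) : Prop :=
  Monotone (fun t => l (β.symm t))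

end Paper

namespace Paper

variable {k : Type} [Field k] {ι : Type} [Fintype ι] [DecidableEq ι]

/-- The starting position of the `t`-th consecutive block of lengths `l`. -/
def startOf {bbar : ℕ} (l : Fin bbar → ℕ) (t : Fin bbar) : ℕ :=
  ∑ t' : Fin bbar, if t' < t then l t' else 0

/-- The total degree `Σ_{x ∈ block t} |v_x|` of the `t`-th block of the tensor
`v₁⊗⋯⊗vₙ` (given in coordinates by `I`). -/
def blockSum {bbar n : ℕ} (deg : ι → ℤ) (l : Fin bbar → ℕ) (t : Fin bbar)
    (I : Fin n → ι) : ℤ :=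
  ∑ x : Fin n, if startOf l t ≤ (x : ℕ) ∧ (x : ℕ) < startOf l t + l t
    then deg (I x) else 0

/-- `ρ ∈ Σ_n` cyclically rotates the `t₀`-th block (sending the entry at offset
`j` to offset `(j+1) mod l t₀`) and fixes everything else. -/
def IsBlockRotate (n : ℕ) {bbar : ℕ} (l : Fin bbar → ℕ) (t₀ : Fin bbar)
    (ρ : Equiv.Perm (Fin n)) : Prop :=
  (∀ x : Fin n, ((x : ℕ) < startOf l t₀ ∨ startOf l t₀ + l t₀ ≤ (x : ℕ)) → ρ x = x) ∧
  (∀ j, j < l t₀ → ∀ h1 : startOf l t₀ + j < n,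
    ((ρ ⟨startOf l t₀ + j, h1⟩ : Fin n) : ℕ) = startOf l t₀ + (j + 1) % l t₀)

/-- The reduced string vertex
`𝓕^{g,b}_{v₁,…,v_{l₁}|⋯} := −½ (f^{(b_k),g} ∘ β_{(l₁,…,l_b̄)})(v₁⊗⋯⊗vₙ)`,
evaluated on the basis tensor with coordinates `I`, where `σ` is the block
permutation `β_{(l)}` for a sorting `β` of `(l)`. -/
def Fvertex (deg : ι → ℤ) {n : ℕ} (f : TPow k ι n →ₗ[k] k)
    (σ : Equiv.Perm (Fin n)) (I : Fin n → ι) : k :=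
  - (2 : k)⁻¹ * f (permAct k ι deg σ (Finsupp.single I 1))

/-! ### Auxiliary lemmas -/

section Signs

variable {n : ℕ}

lemma msign_add (x y : ℤ) : msign k (x + y) = msign k x * msign k y := by
  unfold msign
  by_cases hx : Odd x <;> by_cases hy : Odd y <;>
    simp [hx, hy, Int.odd_add, parity_simps] <;> simp_all [Int.not_odd_iff_even, parity_simps]

lemma msign_sum {α : Type*} (s : Finset α) (h : α → ℤ) :
    msign k (∑ i ∈ s, h i) = ∏ i ∈ s, msign k (h i) := by
  classical
  induction s using Finset.induction with
  | empty => simp [msign]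
  | insert a s hx ih => rw [Finset.sum_insert hx, Finset.prod_insert hx, msign_add, ih]

lemma msign_mul (x y : ℤ) : msign k (x * y) = if Odd x ∧ Odd y then (-1 : k) else 1 := by
  unfold msign
  by_cases hx : Odd x <;> by_cases hy : Odd y <;> simp [hx, hy, Int.odd_mul]

lemma koszulSign_eq_prod (d : Fin n → ℤ) (τ : Equiv.Perm (Fin n)) :
    koszulSign k d τ =
      ∏ p ∈ (univ ×ˢ univ).filter (fun p : Fin n × Fin n => p.1 < p.2),
        (if τ p.2 < τ p.1 ∧ Odd (d p.1) ∧ Odd (d p.2) then (-1 : k) else 1) := by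
  rw [koszulSign, ← Finset.prod_product', Finset.prod_filter]
  refine Finset.prod_congr rfl fun p _ => ?_
  split_ifs with h1 h2 h3 h4 h5 <;> tauto

lemma koszulSign_mul_self (d : Fin n → ℤ) (τ : Equiv.Perm (Fin n)) :
    koszulSign k d τ * koszulSign k d τ = 1 := by
  rw [koszulSign_eq_prod, ← Finset.prod_mul_distrib]
  rw [Finset.prod_congr rfl (g := fun _ => (1:k)) fun p _ => by split_ifs <;> ring]
  exact Finset.prod_const_one

lemma koszulSign_comp (d : Fin n → ℤ) (τ ρ : Equiv.Perm (Fin n)) :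
    koszulSign k d (τ * ρ) = koszulSign k (d ∘ ρ.symm) τ * koszulSign k d ρ := by
  have key : koszulSign k d (τ * ρ) * koszulSign k d ρ = koszulSign k (d ∘ ρ.symm) τ := by
    rw [koszulSign_eq_prod, koszulSign_eq_prod, koszulSign_eq_prod, ← Finset.prod_mul_distrib]
    refine Finset.prod_nbij'
      (fun p => if ρ p.1 < ρ p.2 then (ρ p.1, ρ p.2) else (ρ p.2, ρ p.1))
      (fun q => if ρ.symm q.1 < ρ.symm q.2 then (ρ.symm q.1, ρ.symm q.2)
        else (ρ.symm q.2, ρ.symm q.1)) ?_ ?_ ?_ ?_ ?_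
    · intro p hp
      simp only [Finset.mem_filter, Finset.mem_product] at hp ⊢
      have hne : ρ p.1 ≠ ρ p.2 := fun h => absurd (ρ.injective h) (ne_of_lt hp.2)
      rcases lt_or_gt_of_ne hne with h | h <;> simp [h, not_lt_of_gt]
    · intro q hq
      simp only [Finset.mem_filter, Finset.mem_product] at hq ⊢
      have hne : ρ.symm q.1 ≠ ρ.symm q.2 := fun h => absurd (ρ.symm.injective h) (ne_of_lt hq.2)
      rcases lt_or_gt_of_ne hne with h | h <;> simp [h, not_lt_of_gt]
    · intro p hp
      simp only [Finset.mem_filter, Finset.mem_product] at hp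
      have hne : ρ p.1 ≠ ρ p.2 := fun h => absurd (ρ.injective h) (ne_of_lt hp.2)
      rcases lt_or_gt_of_ne hne with h | h
      · simp [h, Equiv.symm_apply_apply, hp.2]
      · simp [h, not_lt_of_gt h, Equiv.symm_apply_apply, not_lt_of_gt hp.2]
    · intro q hq
      simp only [Finset.mem_filter, Finset.mem_product] at hq
      have hne : ρ.symm q.1 ≠ ρ.symm q.2 := fun h => absurd (ρ.symm.injective h) (ne_of_lt hq.2)
      rcases lt_or_gt_of_ne hne with h | h
      · simp [h, Equiv.apply_symm_apply, hq.2]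
      · simp [h, not_lt_of_gt h, Equiv.apply_symm_apply, not_lt_of_gt hq.2]
    · intro p hp
      simp only [Finset.mem_filter, Finset.mem_product] at hp
      have hne : ρ p.1 ≠ ρ p.2 := fun h => absurd (ρ.injective h) (ne_of_lt hp.2)
      have hne2 : τ (ρ p.1) ≠ τ (ρ p.2) := fun h => absurd (τ.injective h) hne
      rcases lt_or_gt_of_ne hne with h | h
      · beta_reduce
        rw [if_pos h]
        rw [Equiv.Perm.mul_apply, Equiv.Perm.mul_apply]
        simp only [Equiv.symm_apply_apply, Equiv.Perm.mul_apply, Function.comp_apply]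
        have h3 : ¬(ρ p.2 < ρ p.1 ∧ Odd (d p.1) ∧ Odd (d p.2)) :=
          fun hc => absurd hc.1 (not_lt_of_gt h)
        rw [if_neg h3, mul_one]
      · beta_reduce
        rw [if_neg (not_lt_of_gt h)]
        rw [Equiv.Perm.mul_apply, Equiv.Perm.mul_apply]
        simp only [Equiv.symm_apply_apply, Equiv.Perm.mul_apply, Function.comp_apply]
        by_cases hO : Odd (d p.1) ∧ Odd (d p.2)
        · have hr : ρ p.2 < ρ p.1 ∧ Odd (d p.1) ∧ Odd (d p.2) := ⟨h, hO.1, hO.2⟩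
          rw [if_pos hr]
          rcases lt_or_gt_of_ne hne2 with h2 | h2
          · have h3 : ¬(τ (ρ p.2) < τ (ρ p.1) ∧ Odd (d p.1) ∧ Odd (d p.2)) :=
              fun hc => absurd hc.1 (not_lt_of_gt h2)
            have h4 : τ (ρ p.1) < τ (ρ p.2) ∧ Odd (d p.2) ∧ Odd (d p.1) := ⟨h2, hO.2, hO.1⟩
            rw [if_neg h3, if_pos h4]; ring
          · have h3 : τ (ρ p.2) < τ (ρ p.1) ∧ Odd (d p.1) ∧ Odd (d p.2) := ⟨h2, hO.1, hO.2⟩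
            have h4 : ¬(τ (ρ p.1) < τ (ρ p.2) ∧ Odd (d p.2) ∧ Odd (d p.1)) :=
              fun hc => absurd hc.1 (not_lt_of_gt h2)
            rw [if_pos h3, if_neg h4]; ring
        · have h3 : ¬(τ (ρ p.2) < τ (ρ p.1) ∧ Odd (d p.1) ∧ Odd (d p.2)) :=
            fun hc => hO ⟨hc.2.1, hc.2.2⟩
          have h4 : ¬(ρ p.2 < ρ p.1 ∧ Odd (d p.1) ∧ Odd (d p.2)) :=
            fun hc => hO ⟨hc.2.1, hc.2.2⟩
          have h5 : ¬(τ (ρ p.1) < τ (ρ p.2) ∧ Odd (d p.2) ∧ Odd (d p.1)) :=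
            fun hc => hO ⟨hc.2.2, hc.2.1⟩
          rw [if_neg h3, if_neg h4, if_neg h5, mul_one]
  rw [← key, mul_assoc, koszulSign_mul_self, mul_one]

lemma permAct_single (deg : ι → ℤ) (τ : Equiv.Perm (Fin n)) (I : Fin n → ι) :
    permAct k ι deg τ (Finsupp.single I 1) =
      koszulSign k (fun p => deg (I p)) τ • Finsupp.single (I ∘ τ.symm) (1 : k) := by
  unfold permAct
  rw [Finsupp.lift_apply, Finsupp.sum_single_index (by simp), one_smul]

lemma permAct_permAct (deg : ι → ℤ) (τ ρ : Equiv.Perm (Fin n)) (I : Fin n → ι) :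
    permAct k ι deg τ (permAct k ι deg ρ (Finsupp.single I 1)) =
      permAct k ι deg (τ * ρ) (Finsupp.single I 1) := by
  rw [permAct_single, map_smul, permAct_single, permAct_single, koszulSign_comp, smul_smul,
    mul_comm (koszulSign k (fun p => deg (I p)) ρ)]
  rfl

lemma Fvertex_shift (deg : ι → ℤ) (f : TPow k ι n →ₗ[k] k)
    (τ σ σ' ρ : Equiv.Perm (Fin n))
    (hτ : f.comp (permAct k ι deg τ) = f) (hσ : σ = τ * (σ' * ρ)) (I : Fin n → ι) :
    Fvertex deg f σ I =
      koszulSign k (fun p => deg (I p)) ρ * Fvertex deg f σ' (I ∘ ρ.symm) := by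
  have hτ' : ∀ x, f (permAct k ι deg τ x) = f x := fun x => DFunLike.congr_fun hτ x
  have h1 : f (permAct k ι deg σ (Finsupp.single I 1)) =
      f (permAct k ι deg σ' (permAct k ι deg ρ (Finsupp.single I 1))) := by
    rw [permAct_permAct, hσ, ← permAct_permAct, hτ']
  unfold Fvertex
  simp only [h1, permAct_single deg ρ I, map_smul, smul_eq_mul]
  ring

end Signs

section Blocks

variable {bbar : ℕ}

lemma startOf_succ (l : Fin bbar → ℕ) (t : Fin bbar) :
    startOf l t + l t = ∑ u : Fin bbar, if u ≤ t then l u else 0 := by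
  unfold startOf
  have hlt : l t = ∑ u : Fin bbar, if u = t then l u else 0 := by simp
  rw [hlt, ← Finset.sum_add_distrib]
  refine Finset.sum_congr rfl fun u _ => ?_
  rcases lt_trichotomy u t with h | h | h
  · rw [if_pos h, if_neg (ne_of_lt h), if_pos (le_of_lt h), add_zero]
  · subst h; simp
  · rw [if_neg (not_lt_of_gt h), if_neg (ne_of_gt h), if_neg (not_le_of_gt h), add_zero]

lemma startOf_add_le (l : Fin bbar → ℕ) {t t' : Fin bbar} (h : t < t') :
    startOf l t + l t ≤ startOf l t' := by
  rw [startOf_succ]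
  unfold startOf
  refine Finset.sum_le_sum fun u _ => ?_
  by_cases hu : u ≤ t
  · rw [if_pos hu, if_pos (lt_of_le_of_lt hu h)]
  · rw [if_neg hu]; exact Nat.zero_le _

lemma startOf_add_self_le (l : Fin bbar → ℕ) (t : Fin bbar) :
    startOf l t + l t ≤ ∑ u : Fin bbar, l u := by
  rw [startOf_succ]
  refine Finset.sum_le_sum fun u _ => ?_
  split_ifs <;> simp

lemma exists_block (hb : 0 < bbar) (l : Fin bbar → ℕ) (x : ℕ) (hx : x < ∑ u : Fin bbar, l u) :
    ∃ t j, j < l t ∧ x = startOf l t + j := by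
  classical
  set S := Finset.univ.filter (fun t : Fin bbar => startOf l t ≤ x) with hS
  have h0 : (⟨0, hb⟩ : Fin bbar) ∈ S := by
    simp only [hS, Finset.mem_filter, Finset.mem_univ, true_and]
    have : startOf l ⟨0, hb⟩ = 0 := Finset.sum_eq_zero fun u _ => by
      rw [if_neg]; exact fun hu => absurd (Fin.lt_def.mp hu) (Nat.not_lt_zero _)
    omega
  have hne : S.Nonempty := ⟨_, h0⟩
  set t := S.max' hne with ht
  have htS : t ∈ S := S.max'_mem hne
  have htx : startOf l t ≤ x := (Finset.mem_filter.mp htS).2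
  refine ⟨t, x - startOf l t, ?_, by omega⟩
  by_contra hcon
  push_neg at hcon
  have hge : startOf l t + l t ≤ x := by omega
  by_cases hlast : (t : ℕ) + 1 < bbar
  · set t' : Fin bbar := ⟨(t : ℕ) + 1, hlast⟩ with ht'
    have htt' : t < t' := by simp [Fin.lt_def, ht']
    have heq : startOf l t' = startOf l t + l t := by
      rw [startOf_succ]
      unfold startOf
      refine Finset.sum_congr rfl fun u _ => ?_
      refine if_congr ?_ rfl rfl
      rw [Fin.lt_def, Fin.le_def]
      exact Nat.lt_succ_iff
    have : startOf l t' ≤ x := by omega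
    have ht'S : t' ∈ S := by simp [hS, this]
    exact absurd (S.le_max' t' ht'S) (not_le_of_gt htt')
  · have hall : ∀ u : Fin bbar, u ≤ t := fun u => by
      have := u.isLt; exact Fin.le_def.mpr (by omega)
    have : ∑ u : Fin bbar, l u = startOf l t + l t := by
      rw [startOf_succ]
      exact Finset.sum_congr rfl fun u _ => (if_pos (hall u)).symm
    omega

lemma startOf_comp_equiv (l : Fin bbar → ℕ) (e : Equiv.Perm (Fin bbar)) (t : Fin bbar) :
    startOf (fun u => l (e.symm u)) (e t) = ∑ t' : Fin bbar, if e t' < e t then l t' else 0 := by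
  unfold startOf
  exact (Fintype.sum_equiv e (fun t' => if e t' < e t then l t' else 0)
    (fun u => if u < e t then l (e.symm u) else 0) (fun x => by simp)).symm

end Blocks

section CanonStructure

lemma count_ofFn {bb : ℕ} (h : Fin bb → ℕ) (v : ℕ) :
    List.count v (List.ofFn h) = (Finset.univ.filter fun u => h u = v).card := by
  rw [List.ofFn_eq_map, List.count_eq_countP, List.countP_map, Finset.card_filter,
    Fin.sum_univ_def]
  induction (List.finRange bb) with
  | nil => simp
  | cons a t ih =>
    by_cases hv : h a = v <;> simp [List.countP_cons, hv, ih, Function.comp] <;> omega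

lemma blocksAux_length (s : ℕ) (L : List ℕ) : (blocksAux s L).length = L.length := by
  induction L generalizing s with
  | nil => rfl
  | cons m rest ih => simp [blocksAux, ih]

lemma blocksAux_getElem (s : ℕ) (L : List ℕ) (i : ℕ) (h : i < L.length)
    (h' : i < (blocksAux s L).length) :
    (blocksAux s L)[i] = (List.range L[i]).map ((s + (L.take i).sum) + ·) := by
  induction L generalizing s i with
  | nil => simp at h
  | cons m rest ih =>
    cases i with
    | zero => simp [blocksAux]
    | succ i =>
      have hi : i < rest.length := by simpa using h
      have hi' : i < (blocksAux (s + m) rest).length := by rwa [blocksAux_length]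
      simp only [blocksAux, List.getElem_cons_succ]
      rw [ih (s + m) i hi hi']
      simp only [List.take_succ_cons, List.sum_cons]
      congr 1
      funext x
      omega

lemma blocksAux_replicate_zero (s c : ℕ) (L : List ℕ) :
    blocksAux s (List.replicate c 0 ++ L) = List.replicate c [] ++ blocksAux s L := by
  induction c with
  | zero => simp
  | succ c ih =>
    rw [List.replicate_succ, List.cons_append, List.replicate_succ, List.cons_append]
    show ((List.range 0).map (s + ·)) :: blocksAux (s + 0) (List.replicate c 0 ++ L) = _
    rw [Nat.add_zero, ih]
    simp

lemma take_ofFn_sum {bb : ℕ} (m : Fin bb → ℕ) (i : ℕ) (hi : i ≤ bb) :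
    ((List.ofFn m).take i).sum = ∑ u : Fin bb, if (u : ℕ) < i then m u else 0 := by
  induction i with
  | zero => simp
  | succ i ih =>
    have hi' : i < bb := hi
    rw [List.sum_take_succ _ i (by simpa using hi'), ih (le_of_lt hi'), List.getElem_ofFn]
    have hone : m ⟨i, by simpa using hi'⟩ = ∑ u : Fin bb, if u = ⟨i, by simpa using hi'⟩
        then m u else 0 := by simp
    rw [hone, ← Finset.sum_add_distrib]
    refine Finset.sum_congr rfl fun u _ => ?_
    simp only [Fin.ext_iff]
    split_ifs <;> omega

lemma blocksAux_ofFn {bb : ℕ} (m : Fin bb → ℕ) :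
    blocksAux 0 (List.ofFn m) =
      List.ofFn (fun u => (List.range (m u)).map (startOf m u + ·)) := by
  refine List.ext_getElem (by rw [blocksAux_length]; simp) fun i h1 h2 => ?_
  have hib : i < bb := by
    have := h1; rwa [blocksAux_length, List.length_ofFn] at this
  rw [blocksAux_getElem 0 _ i (by simpa using hib) h1, List.getElem_ofFn, List.getElem_ofFn]
  rw [take_ofFn_sum m i (le_of_lt hib)]
  have hst : startOf m ⟨i, hib⟩ = ∑ u : Fin bb, if (u : ℕ) < i then m u else 0 := by
    unfold startOf
    exact Finset.sum_congr rfl fun u _ => if_congr (by rw [Fin.lt_def]) rfl rfl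
  refine List.map_congr_left fun x _ => ?_
  rw [← hst, Nat.zero_add]

/-- The `u`-th canonical cycle. -/
def finBlock (n : ℕ) (hn : 0 < n) {bb : ℕ} (m : Fin bb → ℕ) (u : Fin bb) : Cycle (Fin n) :=
  ↑((List.range (m u)).map
      (fun j => (⟨(startOf m u + j) % n, Nat.mod_lt _ hn⟩ : Fin n)))

lemma canon_cycles (n : ℕ) (hn : 0 < n) (bk : ℕ → ℕ) (g : ℕ) {bb : ℕ} (b₀ : ℕ)
    (m : Fin bb → ℕ)
    (hL : (List.range (n + 1)).flatMap (fun v => List.replicate (bk v) v) =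
      List.replicate b₀ 0 ++ List.ofFn m) :
    canonEl n hn bk g =
      (g, ↑(List.replicate b₀ (Cycle.nil : Cycle (Fin n)) ++
        List.ofFn (fun u => finBlock n hn m u))) := by
  unfold canonEl
  rw [hL, blocksAux_replicate_zero, blocksAux_ofFn]
  congr 1
  rw [List.map_append, List.map_replicate, List.map_ofFn]
  have h1 : ((fun (L : List ℕ) =>
      ((L.map (fun x => (⟨x % n, Nat.mod_lt _ hn⟩ : Fin n))) : Cycle (Fin n))) ∘
      fun u => (List.range (m u)).map (startOf m u + ·)) = fun u => finBlock n hn m u := by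
    funext u
    simp only [Function.comp_apply]
    unfold finBlock
    rw [List.map_map]
    rfl
  rw [h1]
  rfl

lemma multiset_ofFn_comp_perm {α : Type*} {N : ℕ} (f : Fin N → α) (θ : Equiv.Perm (Fin N)) :
    (↑(List.ofFn (fun u => f (θ u))) : Multiset α) = ↑(List.ofFn f) := by
  rw [List.ofFn_eq_map, List.ofFn_eq_map]
  have huniv : (Finset.univ : Finset (Fin N)).val = ↑(List.finRange N) := by
    rw [Fin.univ_def]
  have hv : Multiset.map (⇑θ) ↑(List.finRange N) = ↑(List.finRange N) := by
    have := congrArg Finset.val (Finset.map_univ_equiv θ)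
    rwa [Finset.map_val, huniv] at this
  calc (↑(List.map (fun u => f (θ u)) (List.finRange N)) : Multiset α)
      = Multiset.map (f ∘ ⇑θ) ↑(List.finRange N) := by rw [← Multiset.map_coe]; rfl
    _ = Multiset.map f (Multiset.map (⇑θ) ↑(List.finRange N)) := by
        rw [Multiset.map_map]
    _ = Multiset.map f ↑(List.finRange N) := by rw [hv]
    _ = ↑(List.map f (List.finRange N)) := by rw [← Multiset.map_coe]

lemma rotate_block_list {α : Type*} (M c : ℕ) (e : ℕ → α) :
    (List.range M).map (fun j => e ((j + c) % M)) = ((List.range M).map e).rotate c := by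
  refine List.ext_getElem (by simp) fun i h1 h2 => ?_
  rw [List.getElem_map, List.getElem_rotate, List.getElem_map, List.getElem_range]
  congr 1
  simp

lemma qoAct_canon (n : ℕ) (hn : 0 < n) (bk : ℕ → ℕ) (g : ℕ) {bb : ℕ} (b₀ : ℕ)
    (m : Fin bb → ℕ)
    (hL : (List.range (n + 1)).flatMap (fun v => List.replicate (bk v) v) =
      List.replicate b₀ 0 ++ List.ofFn m)
    (hmn : ∀ u, startOf m u + m u ≤ n)
    (τ : Equiv.Perm (Fin n)) (θ : Equiv.Perm (Fin bb)) (hθ : ∀ u, m (θ u) = m u)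
    (c : Fin bb → ℕ)
    (hτ : ∀ (u : Fin bb) (j : ℕ), j < m u → ∀ h1 : startOf m u + j < n,
      ((τ ⟨startOf m u + j, h1⟩ : Fin n) : ℕ) = startOf m (θ u) + (j + c u) % m u) :
    qoAct τ (canonEl n hn bk g) = canonEl n hn bk g := by
  rw [canon_cycles n hn bk g b₀ m hL]
  unfold qoAct
  simp only [Prod.mk.injEq, true_and]
  have hmain : ∀ u, Cycle.map (⇑τ) (finBlock n hn m u) = finBlock n hn m (θ u) := by
    intro u
    unfold finBlock
    rw [Cycle.map_coe, List.map_map]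
    have hmap : (List.range (m u)).map
        ((⇑τ) ∘ fun j => (⟨(startOf m u + j) % n, Nat.mod_lt _ hn⟩ : Fin n)) =
        (List.range (m u)).map
          (fun j => (⟨(startOf m (θ u) + (j + c u) % m u) % n, Nat.mod_lt _ hn⟩ : Fin n)) := by
      refine List.map_congr_left fun j hj => ?_
      have hj' : j < m u := List.mem_range.mp hj
      have hlt : startOf m u + j < n := by have := hmn u; omega
      have harg : (⟨(startOf m u + j) % n, Nat.mod_lt _ hn⟩ : Fin n) =
          ⟨startOf m u + j, hlt⟩ := by
        ext; simp [Nat.mod_eq_of_lt hlt]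
      rw [Function.comp_apply, harg]
      have hmu : 0 < m u := lt_of_le_of_lt (Nat.zero_le j) hj'
      have h3 := hmn (θ u)
      rw [hθ u] at h3
      have h4 : (j + c u) % m u < m u := Nat.mod_lt _ hmu
      ext
      rw [hτ u j hj' hlt]
      exact (Nat.mod_eq_of_lt (by omega)).symm
    rw [hmap]
    have hrot := rotate_block_list (m u) (c u)
      (fun j => (⟨(startOf m (θ u) + j % m u) % n, Nat.mod_lt _ hn⟩ : Fin n))
    have hlist : (List.range (m u)).map
        (fun j => (⟨(startOf m (θ u) + (j + c u) % m u) % n, Nat.mod_lt _ hn⟩ : Fin n)) =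
        ((List.range (m u)).map
          (fun j => (⟨(startOf m (θ u) + j % m u) % n, Nat.mod_lt _ hn⟩ : Fin n))).rotate
            (c u) := by
      rw [← hrot]
      refine List.map_congr_left fun j hj => ?_
      congr 1
      exact congrArg (fun z => (startOf m (θ u) + z) % n)
        (Nat.mod_mod_of_dvd _ dvd_rfl).symm
    have hmodcol : (List.range (m (θ u))).map
        (fun j => (⟨(startOf m (θ u) + j) % n, Nat.mod_lt _ hn⟩ : Fin n)) =
        (List.range (m u)).map
          (fun j => (⟨(startOf m (θ u) + j % m u) % n, Nat.mod_lt _ hn⟩ : Fin n)) := by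
      rw [hθ u]
      refine List.map_congr_left fun j hj => ?_
      have hj' : j < m u := List.mem_range.mp hj
      congr 1
      exact congrArg (fun z => (startOf m (θ u) + z) % n) (Nat.mod_eq_of_lt hj').symm
    rw [hlist]
    show _ = finBlock n hn m (θ u)
    unfold finBlock
    rw [hmodcol]
    exact Cycle.coe_eq_coe.mpr (List.IsRotated.forall _ _)
  rw [Multiset.map_coe, List.map_append, List.map_replicate, Cycle.map_nil, List.map_ofFn]
  have : (List.ofFn (Cycle.map (⇑τ) ∘ fun u => finBlock n hn m u)) =
      List.ofFn (fun u => finBlock n hn m (θ u)) := by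
    congr 1
    funext u
    exact hmain u
  rw [this]
  have hco : (↑(List.replicate b₀ (Cycle.nil : Cycle (Fin n)) ++
      List.ofFn (fun u => finBlock n hn m (θ u))) : Multiset (Cycle (Fin n))) =
      ↑(List.replicate b₀ (Cycle.nil : Cycle (Fin n))) +
        ↑(List.ofFn (fun u => finBlock n hn m (θ u))) := by
    exact_mod_cast rfl
  rw [hco, multiset_ofFn_comp_perm (fun u => finBlock n hn m u) θ]
  exact_mod_cast rfl

end CanonStructure

section SortedList

lemma sorted_flatMap_replicate (c : ℕ → ℕ) (K : ℕ) :
    (((List.range K).map Nat.succ).flatMap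
      (fun m => List.replicate (c m) m)).Pairwise (· ≤ ·) := by
  induction K with
  | zero => simp
  | succ K ih =>
    rw [List.range_succ, List.map_append, List.flatMap_append]
    simp only [List.map_cons, List.map_nil, List.flatMap_cons, List.flatMap_nil,
      List.append_nil]
    rw [List.pairwise_append]
    refine ⟨ih, List.pairwise_replicate.mpr (Or.inr le_rfl), ?_⟩
    intro a ha b hb
    obtain ⟨x, hx, hax⟩ := List.mem_flatMap.mp ha
    obtain ⟨w, hw, rfl⟩ := List.mem_map.mp hx
    have h1 := List.eq_of_mem_replicate hax
    have h2 := List.eq_of_mem_replicate hb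
    have h3 := List.mem_range.mp hw
    omega

lemma bseqOf_comp_perm {bb : ℕ} (l : Fin bb → ℕ) (e : Equiv.Perm (Fin bb)) (b₀ : ℕ) :
    bseqOf (fun i => l (e i)) b₀ = bseqOf l b₀ := by
  funext v
  unfold bseqOf
  by_cases hv : v = 0
  · simp [hv]
  · simp only [hv, if_false]
    refine Finset.card_bij' (fun i _ => e i) (fun t _ => e.symm t) ?_ ?_ ?_ ?_ <;> simp

lemma flatMap_bseq {bb : ℕ} (n b₀ : ℕ) (l : Fin bb → ℕ) (β : Equiv.Perm (Fin bb))
    (hβ : SortsBlocks l β) (hpos : ∀ i, 0 < l i) (hsum : ∑ i, l i = n) :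
    (List.range (n + 1)).flatMap (fun v => List.replicate (bseqOf l b₀ v) v) =
      List.replicate b₀ 0 ++ List.ofFn (fun u => l (β.symm u)) := by
  have hle : ∀ t, l t ≤ n := by
    intro t
    rw [← hsum]
    exact Finset.single_le_sum (fun i _ => Nat.zero_le (l i)) (Finset.mem_univ t)
  rw [List.range_succ_eq_map, List.flatMap_cons]
  have h0 : bseqOf l b₀ 0 = b₀ := by simp [bseqOf]
  rw [h0]
  congr 1
  refine (fun hp hs => List.Perm.eq_of_pairwise' (sorted_flatMap_replicate _ n) hs hp) ?_ ?_
  · rw [List.perm_iff_count]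
    intro v
    rw [List.count_flatMap, List.map_map]
    have hcast : (List.map ((List.count v ∘ fun m => List.replicate (bseqOf l b₀ m) m)
        ∘ Nat.succ) (List.range n)).sum =
        ∑ i ∈ Finset.range n, List.count v (List.replicate (bseqOf l b₀ (i + 1)) (i + 1)) :=
      rfl
    rw [hcast]
    have hterm : ∀ i, List.count v (List.replicate (bseqOf l b₀ (i + 1)) (i + 1)) =
        if i + 1 = v then bseqOf l b₀ (i + 1) else 0 := by
      intro i
      simp [List.count_replicate]
    simp only [hterm]
    rw [count_ofFn]
    have hbij : (Finset.univ.filter fun u => l (β.symm u) = v).card =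
        (Finset.univ.filter fun i => l i = v).card := by
      refine Finset.card_bij' (fun u _ => β.symm u) (fun t _ => β t) ?_ ?_ ?_ ?_ <;> simp
    rw [hbij]
    rcases Nat.eq_zero_or_pos v with hv | hv
    · subst hv
      rw [Finset.sum_eq_zero (fun i _ => by simp)]
      rw [Finset.card_eq_zero.mpr]
      rw [Finset.filter_eq_empty_iff]
      intro t _
      exact fun h => absurd h (by have := hpos t; omega)
    · have hstep : ∀ i ∈ Finset.range n, (if i + 1 = v then bseqOf l b₀ (i + 1) else 0) =
          if i = v - 1 then bseqOf l b₀ v else 0 := by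
        intro i _
        by_cases h : i + 1 = v
        · rw [if_pos h, if_pos (by omega), h]
        · rw [if_neg h, if_neg (by omega)]
      rw [Finset.sum_congr rfl hstep, Finset.sum_ite_eq' (Finset.range n) (v - 1)
        (fun _ => bseqOf l b₀ v)]
      have hbv : bseqOf l b₀ v = (Finset.univ.filter fun i => l i = v).card := by
        simp [bseqOf, Nat.pos_iff_ne_zero.mp hv]
      by_cases hvn : v - 1 ∈ Finset.range n
      · rw [if_pos hvn, hbv]
      · rw [if_neg hvn]
        have hvn' : n < v := by
          simp only [Finset.mem_range] at hvn; omega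
        symm
        rw [Finset.card_eq_zero.mpr]
        rw [Finset.filter_eq_empty_iff]
        intro t _
        have := hle t
        omega
  · rw [List.pairwise_ofFn]
    intro i j hij
    exact hβ (le_of_lt hij)

end SortedList

section SignBlocks

variable {bbar : ℕ}

lemma msign_sum_mul_sum {A B : Type*} [Fintype A] [Fintype B] (e : A → ℤ) (f : B → ℤ) :
    msign k ((∑ i, e i) * (∑ j, f j)) = ∏ i, ∏ j, msign k (e i * f j) := by
  rw [Finset.sum_mul_sum, msign_sum]
  exact Finset.prod_congr rfl fun i _ => msign_sum _ _

lemma koszulSign_swap_blocks {n : ℕ} (hb : 0 < bbar) (l : Fin bbar → ℕ)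
    (hsum : ∑ i, l i = n) (t₀ t₁ : Fin bbar) (ht : (t₁ : ℕ) = (t₀ : ℕ) + 1)
    (ρ : Equiv.Perm (Fin n)) (hρ : IsBlockPerm n l (Equiv.swap t₀ t₁) ρ) (d : Fin n → ℤ) :
    koszulSign k d ρ =
      msign k ((∑ x : Fin n, if startOf l t₀ ≤ (x : ℕ) ∧ (x : ℕ) < startOf l t₀ + l t₀
          then d x else 0) *
        (∑ x : Fin n, if startOf l t₁ ≤ (x : ℕ) ∧ (x : ℕ) < startOf l t₁ + l t₁
          then d x else 0)) := by
  have htt : t₀ < t₁ := by rw [Fin.lt_def]; omega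
  have hv0 : ∀ t : Fin bbar, t ≠ t₀ → (t : ℕ) ≠ (t₀ : ℕ) := fun t h hc => h (Fin.ext hc)
  have hv1 : ∀ t : Fin bbar, t ≠ t₁ → (t : ℕ) ≠ (t₁ : ℕ) := fun t h hc => h (Fin.ext hc)
  have hs₁ : startOf l t₁ = startOf l t₀ + l t₀ := by
    have h := startOf_succ l t₀
    have h2 : startOf l t₁ = ∑ u : Fin bbar, if u ≤ t₀ then l u else 0 := by
      unfold startOf
      exact Finset.sum_congr rfl fun u _ =>
        if_congr (by rw [Fin.lt_def, Fin.le_def]; omega) rfl rfl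
    omega
  set s₀ := startOf l t₀ with hs₀def
  set L₀ := l t₀ with hL₀def
  set L₁ := l t₁ with hL₁def
  have hval : ∀ x : Fin n, (ρ x : ℕ) =
      if (x : ℕ) < s₀ then (x : ℕ) else if (x : ℕ) < s₀ + L₀ then (x : ℕ) + L₁
      else if (x : ℕ) < s₀ + L₀ + L₁ then (x : ℕ) - L₀ else (x : ℕ) := by
    intro x
    obtain ⟨t, j, hj, hx⟩ := exists_block hb l x (by rw [hsum]; exact x.isLt)
    have hbound : startOf l t + j < n := by
      have := startOf_add_self_le l t; omega
    have hxf : x = ⟨startOf l t + j, hbound⟩ := Fin.ext hx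
    have hρx : (ρ x : ℕ) = (∑ t' : Fin bbar,
        if Equiv.swap t₀ t₁ t' < Equiv.swap t₀ t₁ t then l t' else 0) + j := by
      rw [hxf]; exact hρ t j hj hbound
    rcases eq_or_ne t t₀ with heq | ht0
    · have harg : Equiv.swap t₀ t₁ t = t₁ := by rw [heq]; exact Equiv.swap_apply_left _ _
      have hSt : (∑ t' : Fin bbar,
          if Equiv.swap t₀ t₁ t' < Equiv.swap t₀ t₁ t then l t' else 0) = s₀ + L₁ := by
        rw [harg]
        have hterm : ∀ t' : Fin bbar, (if Equiv.swap t₀ t₁ t' < t₁ then l t' else 0) =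
            (if t' < t₀ then l t' else 0) + (if t' = t₁ then l t' else 0) := by
          intro t'
          rcases eq_or_ne t' t₀ with rfl | h0
          · rw [Equiv.swap_apply_left, if_neg (lt_irrefl t₁), if_neg (ne_of_lt htt),
              if_neg (lt_irrefl t')]
          · rcases eq_or_ne t' t₁ with rfl | h1
            · rw [Equiv.swap_apply_right, if_pos htt, if_pos rfl,
                if_neg (not_lt_of_gt htt)]
              omega
            · rw [Equiv.swap_apply_of_ne_of_ne h0 h1, if_neg h1, add_zero]
              refine if_congr ?_ rfl rfl
              rw [Fin.lt_def, Fin.lt_def]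
              have := hv0 t' h0
              have := hv1 t' h1
              omega
        rw [Finset.sum_congr rfl fun t' _ => hterm t', Finset.sum_add_distrib,
          Finset.sum_ite_eq' Finset.univ t₁ l, if_pos (Finset.mem_univ t₁)]
        have hrfl : startOf l t₀ = ∑ t' : Fin bbar, if t' < t₀ then l t' else 0 := rfl
        omega
      have hxv : (x : ℕ) = s₀ + j := by rw [hx, heq]
      have hj' : j < L₀ := by rw [heq] at hj; exact hj
      rw [hρx, hSt]
      split_ifs <;> omega
    · rcases eq_or_ne t t₁ with heq | ht1
      · have harg : Equiv.swap t₀ t₁ t = t₀ := by rw [heq]; exact Equiv.swap_apply_right _ _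
        have hSt : (∑ t' : Fin bbar,
            if Equiv.swap t₀ t₁ t' < Equiv.swap t₀ t₁ t then l t' else 0) = s₀ := by
          rw [harg, hs₀def]
          unfold startOf
          refine Finset.sum_congr rfl fun t' _ => ?_
          rcases eq_or_ne t' t₀ with rfl | h0
          · rw [Equiv.swap_apply_left, if_neg (not_lt_of_gt htt), if_neg (lt_irrefl t')]
          · rcases eq_or_ne t' t₁ with rfl | h1
            · rw [Equiv.swap_apply_right, if_neg (lt_irrefl t₀),
                if_neg (not_lt_of_gt htt)]
            · rw [Equiv.swap_apply_of_ne_of_ne h0 h1]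
        have hxv : (x : ℕ) = s₀ + L₀ + j := by rw [hx, heq]; omega
        have hj' : j < L₁ := by rw [heq] at hj; exact hj
        rw [hρx, hSt]
        split_ifs <;> omega
      · have hSt : (∑ t' : Fin bbar,
            if Equiv.swap t₀ t₁ t' < Equiv.swap t₀ t₁ t then l t' else 0) = startOf l t := by
          rw [Equiv.swap_apply_of_ne_of_ne ht0 ht1]
          unfold startOf
          refine Finset.sum_congr rfl fun t' _ => ?_
          have hvt0 := hv0 t ht0
          have hvt1 := hv1 t ht1
          rcases eq_or_ne t' t₀ with rfl | h0
          · rw [Equiv.swap_apply_left]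
            refine if_congr ?_ rfl rfl
            rw [Fin.lt_def, Fin.lt_def]
            omega
          · rcases eq_or_ne t' t₁ with rfl | h1
            · rw [Equiv.swap_apply_right]
              refine if_congr ?_ rfl rfl
              rw [Fin.lt_def, Fin.lt_def]
              omega
            · rw [Equiv.swap_apply_of_ne_of_ne h0 h1]
        rw [hρx, hSt]
        have hvt0 := hv0 t ht0
        have hvt1 := hv1 t ht1
        rcases lt_or_gt_of_ne (a := (t : ℕ)) (b := (t₀ : ℕ)) (by omega) with hc | hc
        · have hlow : startOf l t + l t ≤ s₀ :=
            startOf_add_le l (show t < t₀ by rw [Fin.lt_def]; omega)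
          split_ifs <;> omega
        · have hhigh : startOf l t₁ + l t₁ ≤ startOf l t :=
            startOf_add_le l (show t₁ < t by rw [Fin.lt_def]; omega)
          split_ifs <;> omega
  rw [hs₁, koszulSign, msign_sum_mul_sum]
  refine Finset.prod_congr rfl fun i _ => Finset.prod_congr rfl fun j _ => ?_
  rw [msign_mul]
  refine if_congr ?_ rfl rfl
  have hvi := hval i
  have hvj := hval j
  constructor
  · rintro ⟨h1, h2, h3, h4⟩
    rw [Fin.lt_def] at h1 h2
    have hBi : s₀ ≤ (i : ℕ) ∧ (i : ℕ) < s₀ + L₀ := by split_ifs at hvi hvj <;> omega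
    have hBj : s₀ + L₀ ≤ (j : ℕ) ∧ (j : ℕ) < s₀ + L₀ + L₁ := by
      split_ifs at hvi hvj <;> omega
    rw [if_pos hBi, if_pos (by omega : s₀ + L₀ ≤ (j : ℕ) ∧ (j : ℕ) < s₀ + L₀ + L₁)]
    exact ⟨h3, h4⟩
  · rintro ⟨ho1, ho2⟩
    by_cases hBi : s₀ ≤ (i : ℕ) ∧ (i : ℕ) < s₀ + L₀
    swap
    · rw [if_neg hBi] at ho1; exact absurd ho1 (by decide)
    by_cases hBj : s₀ + L₀ ≤ (j : ℕ) ∧ (j : ℕ) < s₀ + L₀ + L₁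
    swap
    · rw [if_neg hBj] at ho2; exact absurd ho2 (by decide)
    rw [if_pos hBi] at ho1
    rw [if_pos hBj] at ho2
    refine ⟨Fin.lt_def.mpr (by omega), Fin.lt_def.mpr ?_, ho1, ho2⟩
    split_ifs at hvi hvj <;> omega

lemma koszulSign_rotate_block {n : ℕ} (l : Fin bbar → ℕ)
    (t₀ : Fin bbar) (hL1 : 0 < l t₀) (hlt : startOf l t₀ + l t₀ - 1 < n)
    (ρ : Equiv.Perm (Fin n)) (hρ : IsBlockRotate n l t₀ ρ) (d : Fin n → ℤ) :
    koszulSign k d ρ =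
      msign k ((∑ x : Fin n, if startOf l t₀ ≤ (x : ℕ) ∧ (x : ℕ) < startOf l t₀ + l t₀ - 1
          then d x else 0) *
        (∑ x : Fin n, if x = (⟨startOf l t₀ + l t₀ - 1, hlt⟩ : Fin n) then d x else 0)) := by
  set s₀ := startOf l t₀ with hs₀def
  set L := l t₀ with hLdef
  have hval : ∀ x : Fin n, (ρ x : ℕ) =
      if (x : ℕ) < s₀ ∨ s₀ + L ≤ (x : ℕ) then (x : ℕ)
      else if (x : ℕ) = s₀ + L - 1 then s₀ else (x : ℕ) + 1 := by
    intro x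
    by_cases hout : (x : ℕ) < s₀ ∨ s₀ + L ≤ (x : ℕ)
    · rw [hρ.1 x hout, if_pos hout]
    · rw [if_neg hout]
      push_neg at hout
      set j := (x : ℕ) - s₀ with hjdef
      have hj : j < L := by omega
      have hb2 : s₀ + j < n := by have := x.isLt; omega
      have hxv : (x : ℕ) = s₀ + j := by omega
      have hxf : x = ⟨s₀ + j, hb2⟩ := Fin.ext hxv
      have hvx : (ρ x : ℕ) = s₀ + (j + 1) % L := by rw [hxf]; exact hρ.2 j hj hb2
      rcases eq_or_ne j (L - 1) with hj1 | hj1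
      · rw [if_pos (show (x : ℕ) = s₀ + L - 1 by omega), hvx]
        have hm : (j + 1) % L = 0 := by
          have hL' : j + 1 = L := by omega
          rw [hL', Nat.mod_self]
        rw [hm]
        omega
      · rw [if_neg (show ¬ (x : ℕ) = s₀ + L - 1 by omega), hvx,
          Nat.mod_eq_of_lt (by omega)]
        omega
  rw [koszulSign, msign_sum_mul_sum]
  refine Finset.prod_congr rfl fun i _ => Finset.prod_congr rfl fun j _ => ?_
  rw [msign_mul]
  refine if_congr ?_ rfl rfl
  have hvi := hval i
  have hvj := hval j
  constructor
  · rintro ⟨h1, h2, h3, h4⟩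
    rw [Fin.lt_def] at h1 h2
    have hBi : s₀ ≤ (i : ℕ) ∧ (i : ℕ) < s₀ + L - 1 := by split_ifs at hvi hvj <;> omega
    have hBj : (j : ℕ) = s₀ + L - 1 := by split_ifs at hvi hvj <;> omega
    rw [if_pos hBi, if_pos (Fin.ext hBj)]
    exact ⟨h3, h4⟩
  · rintro ⟨ho1, ho2⟩
    by_cases hBi : s₀ ≤ (i : ℕ) ∧ (i : ℕ) < s₀ + L - 1
    swap
    · rw [if_neg hBi] at ho1; exact absurd ho1 (by decide)
    by_cases hBj : j = (⟨s₀ + L - 1, hlt⟩ : Fin n)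
    swap
    · rw [if_neg hBj] at ho2; exact absurd ho2 (by decide)
    rw [if_pos hBi] at ho1
    rw [if_pos hBj] at ho2
    have hBj' : (j : ℕ) = s₀ + L - 1 := by rw [hBj]
    refine ⟨Fin.lt_def.mpr (by omega), Fin.lt_def.mpr ?_, ho1, ho2⟩
    split_ifs at hvi hvj <;> omega

end SignBlocks

/-- the reduced string vertices satisfy the block symmetries:
(1) two adjacent blocks can be exchanged at the cost of the Koszul sign
`(−1)^{(Σ|v|)(Σ|w|)}`; (2) a block can be cyclically rotated at the cost of the
Koszul sign `(−1)^{|v_i|(|v₁|+⋯+|v_{i−1}|)}`. -/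
theorem statement17 (deg : ι → ℤ)
    (n bbar : ℕ) (hb : 1 ≤ bbar) (l : Fin bbar → ℕ)
    (hpos : ∀ i, 0 < l i) (hsum : ∑ i, l i = n) (hn : 0 < n)
    (b b₀ g : ℕ) (hbb : bbar ≤ b) (hb₀ : b₀ = b - bbar)
    (f : TPow k ι n →ₗ[k] k)
    -- `f = f^{(b_k),g}` is invariant (with Koszul signs) under the stabilizer
    -- of the canonical representative `\overline{(b_k)}^g` :
    (hf : ∀ τ : Equiv.Perm (Fin n),
      qoAct τ (canonEl n hn (bseqOf l b₀) g) = canonEl n hn (bseqOf l b₀) g →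
      f.comp (permAct k ι deg τ) = f) :
    -- (1) exchange of adjacent blocks
    (∀ t₀ t₁ : Fin bbar, (t₁ : ℕ) = (t₀ : ℕ) + 1 →
      ∀ (β β' : Equiv.Perm (Fin bbar)) (σ σ' ρ : Equiv.Perm (Fin n)),
        SortsBlocks l β → IsBlockPerm n l β σ →
        SortsBlocks (l ∘ Equiv.swap t₀ t₁) β' →
        IsBlockPerm n (l ∘ Equiv.swap t₀ t₁) β' σ' →
        IsBlockPerm n l (Equiv.swap t₀ t₁) ρ →
        ∀ I : Fin n → ι,
          Fvertex deg f σ I =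
            msign k (blockSum deg l t₀ I * blockSum deg l t₁ I) *
              Fvertex deg f σ' (I ∘ ρ.symm)) ∧
    -- (2) cyclic rotation within a block
    (∀ t₀ : Fin bbar, ∀ (β : Equiv.Perm (Fin bbar)) (σ ρ : Equiv.Perm (Fin n)),
      SortsBlocks l β → IsBlockPerm n l β σ → IsBlockRotate n l t₀ ρ →
      ∀ I : Fin n → ι,
        Fvertex deg f σ I =
          msign k
            (deg (I ⟨(startOf l t₀ + l t₀ - 1) % n, Nat.mod_lt _ hn⟩) *
              (blockSum deg l t₀ I -
                deg (I ⟨(startOf l t₀ + l t₀ - 1) % n, Nat.mod_lt _ hn⟩))) *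
            Fvertex deg f σ (I ∘ ρ.symm)) := by
  classical
  have hb' : 0 < bbar := hb
  have hle_n : ∀ t : Fin bbar, startOf l t + l t ≤ n := fun t => by
    have := startOf_add_self_le l t; omega
  constructor
  · -- (1) exchange of adjacent blocks
    intro t₀ t₁ ht β β' σ σ' ρ hβ hσ hβ' hσ' hρ I
    set sw := Equiv.swap t₀ t₁ with hswdef
    set m : Fin bbar → ℕ := fun u => l (β.symm u) with hm
    have hpos' : ∀ i, 0 < (l ∘ ⇑sw) i := fun i => hpos _
    have hsum' : ∑ i, (l ∘ ⇑sw) i = n := by rw [← hsum]; exact Equiv.sum_comp sw l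
    have hL : (List.range (n + 1)).flatMap
        (fun v => List.replicate (bseqOf l b₀ v) v) =
        List.replicate b₀ 0 ++ List.ofFn m :=
      flatMap_bseq n b₀ l β hβ hpos hsum
    have hbsw : bseqOf (l ∘ ⇑sw) b₀ = bseqOf l b₀ := bseqOf_comp_perm l sw b₀
    have hL' : (List.range (n + 1)).flatMap
        (fun v => List.replicate (bseqOf l b₀ v) v) =
        List.replicate b₀ 0 ++ List.ofFn (fun u => (l ∘ ⇑sw) (β'.symm u)) := by
      rw [← hbsw]; exact flatMap_bseq n b₀ (l ∘ ⇑sw) β' hβ' hpos' hsum'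
    have hmm' : (fun u => (l ∘ ⇑sw) (β'.symm u)) = m :=
      (List.ofFn_inj.mp (List.append_cancel_left (hL'.symm.trans hL)))
    have hml : ∀ u, m u = l (sw (β'.symm u)) := fun u => (congrFun hmm' u).symm
    have hmβ : ∀ t, m (β t) = l t := fun t => by
      rw [hm]; exact congrArg l (Equiv.symm_apply_apply β t)
    have hsummn : ∑ u, m u = n := by rw [← hsum]; exact Equiv.sum_comp β.symm l
    have hmn : ∀ u, startOf m u + m u ≤ n := fun u => by
      have := startOf_add_self_le m u; omega
    have hstsw : ∀ t : Fin bbar, startOf (l ∘ ⇑sw) (sw t) =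
        ∑ t' : Fin bbar, if sw t' < sw t then l t' else 0 := by
      intro t
      unfold startOf
      refine (Fintype.sum_equiv sw
        (fun t' => if sw t' < sw t then l t' else 0)
        (fun u => if u < sw t then (l ∘ ⇑sw) u else 0) fun t' => ?_).symm
      refine if_congr Iff.rfl ?_ rfl
      simp [hswdef, Equiv.swap_apply_self]
    set θ : Equiv.Perm (Fin bbar) := (β'.symm.trans sw).trans β with hθdef
    set τ : Equiv.Perm (Fin n) := σ * (σ' * ρ)⁻¹ with hτdef
    have hθm : ∀ u, m (θ u) = m u := fun u => by
      have h1 : m (θ u) = l (sw (β'.symm u)) := hmβ (sw (β'.symm u))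
      rw [h1, ← hml u]
    have hτpt : ∀ (u : Fin bbar) (j : ℕ), j < m u → ∀ h1 : startOf m u + j < n,
        ((τ ⟨startOf m u + j, h1⟩ : Fin n) : ℕ) =
          startOf m (θ u) + (j + (fun _ : Fin bbar => 0) u) % m u := by
      intro u j hj h1
      set t : Fin bbar := sw (β'.symm u) with htdef
      have hlt : l t = m u := (hml u).symm
      have hjt : j < l t := by omega
      have hx1 : startOf l t + j < n := by have := hle_n t; omega
      have hswt : sw t = β'.symm u := Equiv.swap_apply_self _ _ _
      have hcomp : (l ∘ ⇑sw) (β'.symm u) = m u := (hml u).symm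
      have hb2 : startOf (l ∘ ⇑sw) (β'.symm u) + j < n := by
        have := startOf_add_self_le (l ∘ ⇑sw) (β'.symm u)
        omega
      have hρv : ((ρ ⟨startOf l t + j, hx1⟩ : Fin n) : ℕ) =
          startOf (l ∘ ⇑sw) (β'.symm u) + j := by
        calc ((ρ ⟨startOf l t + j, hx1⟩ : Fin n) : ℕ)
            = (∑ t' : Fin bbar, if sw t' < sw t then l t' else 0) + j :=
              hρ t j hjt hx1
          _ = startOf (l ∘ ⇑sw) (sw t) + j := by rw [hstsw t]
          _ = startOf (l ∘ ⇑sw) (β'.symm u) + j := by rw [hswt]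
      have hρfin : ρ ⟨startOf l t + j, hx1⟩ =
          ⟨startOf (l ∘ ⇑sw) (β'.symm u) + j, hb2⟩ := Fin.ext hρv
      have hj2 : j < (l ∘ ⇑sw) (β'.symm u) := by omega
      have hσ'v : ((σ' ⟨startOf (l ∘ ⇑sw) (β'.symm u) + j, hb2⟩ : Fin n) : ℕ) =
          startOf m u + j := by
        calc ((σ' ⟨startOf (l ∘ ⇑sw) (β'.symm u) + j, hb2⟩ : Fin n) : ℕ)
            = (∑ s' : Fin bbar, if β' s' < β' (β'.symm u) then (l ∘ ⇑sw) s' else 0) + j :=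
              hσ' (β'.symm u) j hj2 hb2
          _ = startOf (fun w => (l ∘ ⇑sw) (β'.symm w)) (β' (β'.symm u)) + j := by
              rw [startOf_comp_equiv (l ∘ ⇑sw) β' (β'.symm u)]
          _ = startOf m u + j := by rw [hmm', Equiv.apply_symm_apply]
      have hcomb : (σ' * ρ) ⟨startOf l t + j, hx1⟩ = ⟨startOf m u + j, h1⟩ := by
        rw [Equiv.Perm.mul_apply, hρfin]
        exact Fin.ext hσ'v
      have hinv : (σ' * ρ)⁻¹ ⟨startOf m u + j, h1⟩ = ⟨startOf l t + j, hx1⟩ := by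
        rw [← hcomb]; exact Equiv.symm_apply_apply _ _
      have happ : τ ⟨startOf m u + j, h1⟩ = σ ⟨startOf l t + j, hx1⟩ := by
        rw [hτdef, Equiv.Perm.mul_apply, hinv]
      rw [happ]
      have hβt : β t = θ u := rfl
      calc ((σ ⟨startOf l t + j, hx1⟩ : Fin n) : ℕ)
          = (∑ t' : Fin bbar, if β t' < β t then l t' else 0) + j := hσ t j hjt hx1
        _ = startOf (fun u => l (β.symm u)) (β t) + j := by
            rw [startOf_comp_equiv l β t]
        _ = startOf m (θ u) + j := by rw [← hm, hβt]
        _ = startOf m (θ u) + (j + (fun _ : Fin bbar => 0) u) % m u := by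
            have : (j + (fun _ : Fin bbar => 0) u) % m u = j := by
              show (j + 0) % m u = j
              rw [Nat.add_zero, Nat.mod_eq_of_lt hj]
            rw [this]
    have hstab : qoAct τ (canonEl n hn (bseqOf l b₀) g) = canonEl n hn (bseqOf l b₀) g :=
      qoAct_canon n hn (bseqOf l b₀) g b₀ m hL hmn τ θ hθm (fun _ => 0) hτpt
    have hτf := hf τ hstab
    have hσeq : σ = τ * (σ' * ρ) := (inv_mul_cancel_right σ (σ' * ρ)).symm
    rw [Fvertex_shift deg f τ σ σ' ρ hτf hσeq I]
    congr 1
    rw [koszulSign_swap_blocks hb' l hsum t₀ t₁ ht ρ hρ (fun p => deg (I p))]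
    rfl
  · -- (2) cyclic rotation within a block
    intro t₀ β σ ρ hβ hσ hρ I
    set m : Fin bbar → ℕ := fun u => l (β.symm u) with hm
    have hL : (List.range (n + 1)).flatMap
        (fun v => List.replicate (bseqOf l b₀ v) v) =
        List.replicate b₀ 0 ++ List.ofFn m :=
      flatMap_bseq n b₀ l β hβ hpos hsum
    have hmβ : ∀ t, m (β t) = l t := fun t => by
      rw [hm]; exact congrArg l (Equiv.symm_apply_apply β t)
    have hsummn : ∑ u, m u = n := by rw [← hsum]; exact Equiv.sum_comp β.symm l
    have hmn : ∀ u, startOf m u + m u ≤ n := fun u => by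
      have := startOf_add_self_le m u; omega
    have hlast : startOf l t₀ + l t₀ - 1 < n := by
      have := hle_n t₀; have := hpos t₀; omega
    set τ : Equiv.Perm (Fin n) := σ * (σ * ρ)⁻¹ with hτdef
    set c : Fin bbar → ℕ := fun u => if u = β t₀ then l t₀ - 1 else 0 with hc
    have hτpt : ∀ (u : Fin bbar) (j : ℕ), j < m u → ∀ h1 : startOf m u + j < n,
        ((τ ⟨startOf m u + j, h1⟩ : Fin n) : ℕ) =
          startOf m ((Equiv.refl (Fin bbar)) u) + (j + c u) % m u := by
      intro u j hj h1
      set t : Fin bbar := β.symm u with htdef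
      have hlt : l t = m u := rfl
      have hjt : j < l t := by omega
      have hx1 : startOf l t + j < n := by have := hle_n t; omega
      have hβt : β t = u := Equiv.apply_symm_apply β u
      have hσx : ((σ ⟨startOf l t + j, hx1⟩ : Fin n) : ℕ) = startOf m u + j := by
        calc ((σ ⟨startOf l t + j, hx1⟩ : Fin n) : ℕ)
            = (∑ t' : Fin bbar, if β t' < β t then l t' else 0) + j := hσ t j hjt hx1
          _ = startOf (fun u => l (β.symm u)) (β t) + j := by
              rw [startOf_comp_equiv l β t]
          _ = startOf m u + j := by rw [← hm, hβt]
      have hσfin : σ ⟨startOf l t + j, hx1⟩ = ⟨startOf m u + j, h1⟩ := Fin.ext hσx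
      have hσinv : σ⁻¹ ⟨startOf m u + j, h1⟩ = ⟨startOf l t + j, hx1⟩ := by
        rw [← hσfin]; exact Equiv.symm_apply_apply _ _
      rcases eq_or_ne u (β t₀) with hu | hu
      · -- the rotated block
        have htt0 : t = t₀ := by rw [htdef, hu]; exact Equiv.symm_apply_apply β t₀
        set L := l t₀ with hLdef
        have hLpos : 0 < L := hpos t₀
        set j' := (j + (L - 1)) % L with hj'def
        have hj'lt : j' < L := Nat.mod_lt _ hLpos
        have hb' : startOf l t₀ + j' < n := by have := hle_n t₀; omega
        have hjL : j < L := by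
          have hlt0 : l t = l t₀ := by rw [htt0]
          omega
        have hρap := hρ.2 j' hj'lt hb'
        have hkey : (j' + 1) % L = j := by
          have k1 : ∀ a : ℕ, (a % L + 1) % L = (a + 1) % L := fun a => by
            conv_lhs => rw [Nat.add_mod]
            conv_rhs => rw [Nat.add_mod]
            rw [Nat.mod_mod_of_dvd _ dvd_rfl]
          rw [hj'def, k1]
          have : j + (L - 1) + 1 = j + L := by omega
          rw [this, Nat.add_mod_right, Nat.mod_eq_of_lt hjL]
        have hρfin : ρ ⟨startOf l t₀ + j', hb'⟩ = ⟨startOf l t + j, hx1⟩ := by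
          refine Fin.ext ?_
          rw [hρap, hkey]
          show startOf l t₀ + j = startOf l t + j
          rw [htt0]
        have hρinv : ρ⁻¹ ⟨startOf l t + j, hx1⟩ = ⟨startOf l t₀ + j', hb'⟩ := by
          rw [← hρfin]; exact Equiv.symm_apply_apply _ _
        have happ : τ ⟨startOf m u + j, h1⟩ = σ ⟨startOf l t₀ + j', hb'⟩ := by
          rw [hτdef, Equiv.Perm.mul_apply, mul_inv_rev, Equiv.Perm.mul_apply,
            hσinv, hρinv]
        rw [happ]
        have hσx' : ((σ ⟨startOf l t₀ + j', hb'⟩ : Fin n) : ℕ) =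
            startOf m (β t₀) + j' := by
          calc ((σ ⟨startOf l t₀ + j', hb'⟩ : Fin n) : ℕ)
              = (∑ t' : Fin bbar, if β t' < β t₀ then l t' else 0) + j' :=
                hσ t₀ j' (by omega) hb'
            _ = startOf (fun u => l (β.symm u)) (β t₀) + j' := by
                rw [startOf_comp_equiv l β t₀]
            _ = startOf m (β t₀) + j' := by rw [← hm]
        rw [hσx', ← hu]
        have hcu : c u = L - 1 := by rw [hc]; simp [hu]
        have hmu : m u = L := by rw [← hlt, htt0]
        rw [hcu, hmu]
        rfl
      · -- untouched blocks
        have htne : t ≠ t₀ := fun hco => hu (by rw [← hβt, hco])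
        have hfix : ρ ⟨startOf l t + j, hx1⟩ = ⟨startOf l t + j, hx1⟩ := by
          refine hρ.1 _ ?_
          have hvt : (t : ℕ) ≠ (t₀ : ℕ) := fun hc => htne (Fin.ext hc)
          rcases lt_or_gt_of_ne hvt with hcase | hcase
          · left
            show startOf l t + j < startOf l t₀
            have := startOf_add_le l (show t < t₀ by rw [Fin.lt_def]; omega)
            omega
          · right
            show startOf l t₀ + l t₀ ≤ startOf l t + j
            have := startOf_add_le l (show t₀ < t by rw [Fin.lt_def]; omega)
            omega
        have hρinv : ρ⁻¹ ⟨startOf l t + j, hx1⟩ = ⟨startOf l t + j, hx1⟩ := by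
          conv_lhs => rw [← hfix]
          exact Equiv.symm_apply_apply _ _
        have happ : τ ⟨startOf m u + j, h1⟩ = σ ⟨startOf l t + j, hx1⟩ := by
          rw [hτdef, Equiv.Perm.mul_apply, mul_inv_rev, Equiv.Perm.mul_apply,
            hσinv, hρinv]
        rw [happ, hσx]
        have hcu : c u = 0 := by rw [hc]; simp [hu]
        rw [hcu, Nat.add_zero, Nat.mod_eq_of_lt hj]
        rfl
    have hstab : qoAct τ (canonEl n hn (bseqOf l b₀) g) = canonEl n hn (bseqOf l b₀) g :=
      qoAct_canon n hn (bseqOf l b₀) g b₀ m hL hmn τ (Equiv.refl (Fin bbar))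
        (fun u => rfl) c hτpt
    have hτf := hf τ hstab
    have hσeq : σ = τ * (σ * ρ) := (inv_mul_cancel_right σ (σ * ρ)).symm
    rw [Fvertex_shift deg f τ σ σ ρ hτf hσeq I]
    congr 1
    rw [koszulSign_rotate_block l t₀ (hpos t₀) hlast ρ hρ (fun p => deg (I p))]
    have hIdx : (⟨(startOf l t₀ + l t₀ - 1) % n, Nat.mod_lt _ hn⟩ : Fin n) =
        ⟨startOf l t₀ + l t₀ - 1, hlast⟩ := Fin.ext (Nat.mod_eq_of_lt hlast)
    rw [hIdx]
    congr 1
    have hone2 : (∑ x : Fin n, if x = (⟨startOf l t₀ + l t₀ - 1, hlast⟩ : Fin n)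
        then deg (I x) else 0) = deg (I ⟨startOf l t₀ + l t₀ - 1, hlast⟩) := by simp
    have hB : blockSum deg l t₀ I =
        (∑ x : Fin n, if startOf l t₀ ≤ (x : ℕ) ∧ (x : ℕ) < startOf l t₀ + l t₀ - 1
          then deg (I x) else 0) + deg (I ⟨startOf l t₀ + l t₀ - 1, hlast⟩) := by
      unfold blockSum
      rw [← hone2, ← Finset.sum_add_distrib]
      refine Finset.sum_congr rfl fun x _ => ?_
      have hLpos := hpos t₀
      by_cases h1 : (x : ℕ) = startOf l t₀ + l t₀ - 1
      · have hxe : x = ⟨startOf l t₀ + l t₀ - 1, hlast⟩ := Fin.ext h1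
        rw [if_pos (by omega : startOf l t₀ ≤ (x : ℕ) ∧ (x : ℕ) < startOf l t₀ + l t₀),
          if_neg (by omega : ¬(startOf l t₀ ≤ (x : ℕ) ∧
            (x : ℕ) < startOf l t₀ + l t₀ - 1)), if_pos hxe, zero_add]
      · have hxne : x ≠ ⟨startOf l t₀ + l t₀ - 1, hlast⟩ := fun he => h1 (by rw [he])
        rw [if_neg hxne, add_zero]
        refine if_congr ?_ rfl rfl
        omega
    rw [hB, hone2]
    ring


end Paper
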